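/- Suppose h : ℝⁿ → ℝ is continuously differentiable, with sets C = {x : h(x) ≥ 0} and D = {x : h(x) > -b} for some b > 0, and there exist a locally Lipschitz extended class-K function α : (-b,c) → ℝ, a class-K function ι : [0,a) → [0,e) with e = -lim_{r→-b} α(r), and d̄ ∈ [0,a) such that β⁻¹(ι(d̄)) < b where β(r) = -α(-r). If along every solution x(t) of ẋ = f̄(x) + g(x)d(t) with ‖d‖_∞ ≤ d̄ one has d/dt h(x(t)) ≥ -α(h(x(t))) - ι(‖d‖_∞), then the set C_d = {x : h(x) + β⁻¹(ι(‖d‖_∞)) ≥ 0} is forward invariant. -/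

import Mathlib

open Set

/-- Theorem 1 (ISSf-BF implies ISSf): with `β r = -α(-r)`, `γ = β⁻¹ ∘ ι`
(encoded by `β (γ s) = ι s`), if along every solution of
`ẋ = f̄(x) + g(x) d(t)` with `‖d‖_∞ ≤ d̄` one has
`d/dt h(x(t)) ≥ -α(h(x(t))) - ι(‖d‖_∞)`, then the inflated set
`C_d = {x : h(x) + γ(‖d‖_∞) ≥ 0}` is forward invariant. -/
theorem stmt6 (n m : ℕ) (h : EuclideanSpace ℝ (Fin n) → ℝ) (hh : ContDiff ℝ 1 h)
    (α ι γ : ℝ → ℝ) (a b c e dbar : ℝ) (hb : 0 < b) (hc : 0 < c) (ha : 0 < a)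
    -- α is a locally Lipschitz extended class-K function on (-b, c)
    (hαcont : ContinuousOn α (Ioo (-b) c))
    (hαmono : StrictMonoOn α (Ioo (-b) c))
    (hα0 : α 0 = 0)
    (hαlip : ∀ y ∈ Ioo (-b) c, ∃ K : NNReal, ∃ s ∈ nhdsWithin y (Ioo (-b) c),
      LipschitzOnWith K α s)
    -- e = -lim_{r → -b} α(r)
    (he : Filter.Tendsto α (nhdsWithin (-b) (Ioi (-b))) (nhds (-e)))
    -- ι is class-K on [0, a) with values in [0, e)
    (hιcont : ContinuousOn ι (Ico 0 a)) (hιmono : StrictMonoOn ι (Ico 0 a))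
    (hι0 : ι 0 = 0) (hιmaps : MapsTo ι (Ico 0 a) (Ico 0 e))
    -- d̄ ∈ [0, a) and γ = β⁻¹ ∘ ι with β(r) = -α(-r), with β⁻¹(ι(d̄)) < b
    (hdbar : dbar ∈ Ico (0:ℝ) a)
    (hγ : ∀ s ∈ Icc (0:ℝ) dbar, γ s ∈ Ico (0:ℝ) b ∧ -α (-(γ s)) = ι s)
    (hγdbar : γ dbar < b)
    (hγmono : MonotoneOn γ (Icc 0 dbar))
    -- the dynamics and the disturbance with ‖d‖_∞ ≤ Dn ≤ d̄
    (fbar : EuclideanSpace ℝ (Fin n) → EuclideanSpace ℝ (Fin n))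
    (g : EuclideanSpace ℝ (Fin n) →
      (EuclideanSpace ℝ (Fin m) →ₗ[ℝ] EuclideanSpace ℝ (Fin n)))
    (d : ℝ → EuclideanSpace ℝ (Fin m)) (Dn : ℝ)
    (hDn : Dn ∈ Icc (0:ℝ) dbar) (hdnorm : ∀ t, ‖d t‖ ≤ Dn)
    (x : ℝ → EuclideanSpace ℝ (Fin n)) (t₀ T : ℝ) (hT : t₀ < T)
    (hode : ∀ t ∈ Ico t₀ T, HasDerivAt x (fbar (x t) + g (x t) (d t)) t)
    -- the solution remains in D = {x : h(x) > -b} and h(x(t)) < c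
    (hdom : ∀ t ∈ Ico t₀ T, h (x t) ∈ Ioo (-b) c)
    -- ISSf-BF inequality along the solution
    (hbar : ∀ t ∈ Ico t₀ T, deriv (fun s => h (x s)) t ≥ -α (h (x t)) - ι Dn)
    -- initial condition in C_d
    (hinit : h (x t₀) + γ Dn ≥ 0) :
    ∀ t ∈ Ico t₀ T, h (x t) + γ Dn ≥ 0 := by

  intro t₁ ht₁
  by_contra hneg
  push_neg at hneg
  set φ : ℝ → ℝ := fun s => h (x s) with hφ
  have hγDn := hγ Dn hDn
  have hmγ : -γ Dn ∈ Ioo (-b) c :=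
    ⟨by linarith [hγDn.1.2], lt_of_le_of_lt (neg_nonpos.mpr hγDn.1.1) hc⟩
  have hdiff : ∀ t ∈ Ico t₀ T, DifferentiableAt ℝ φ t := by
    intro t ht
    exact (((hh.differentiable one_ne_zero) (x t)).hasFDerivAt.comp_hasDerivAt t
      (hode t ht)).differentiableAt
  have hsub : Icc t₀ t₁ ⊆ Ico t₀ T := fun t ht => ⟨ht.1, lt_of_le_of_lt ht.2 ht₁.2⟩
  have hcont : ContinuousOn φ (Icc t₀ t₁) := fun t ht =>
    ((hdiff t (hsub ht)).continuousAt).continuousWithinAt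
  set A : Set ℝ := Icc t₀ t₁ ∩ φ ⁻¹' (Ici (-γ Dn)) with hA
  have ht₀A : t₀ ∈ A := ⟨⟨le_rfl, ht₁.1⟩, by simp only [mem_preimage, mem_Ici]; linarith⟩
  have hAne : A.Nonempty := ⟨t₀, ht₀A⟩
  have hAbdd : BddAbove A := ⟨t₁, fun t ht => ht.1.2⟩
  have hAclosed : IsClosed A := hcont.preimage_isClosed_of_isClosed isClosed_Icc isClosed_Ici
  set t₂ := sSup A with ht₂
  have ht₂A : t₂ ∈ A := hAclosed.csSup_mem hAne hAbdd
  have hφt₁ : φ t₁ < -γ Dn := by simp only [hφ]; linarith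
  have ht₂lt : t₂ < t₁ := lt_of_le_of_ne ht₂A.1.2 (by
    intro hEq
    have := ht₂A.2
    rw [hEq] at this
    exact absurd this (not_le.mpr hφt₁))
  have hnotA : ∀ t ∈ Ioc t₂ t₁, φ t < -γ Dn := by
    intro t ht
    by_contra hge
    push_neg at hge
    have : t ∈ A := ⟨⟨le_trans ht₂A.1.1 ht.1.le, ht.2⟩, hge⟩
    exact absurd (le_csSup hAbdd this) (not_le.mpr ht.1)
  have hsub2 : Icc t₂ t₁ ⊆ Ico t₀ T := fun t ht =>
    ⟨le_trans ht₂A.1.1 ht.1, lt_of_le_of_lt ht.2 ht₁.2⟩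
  have hmono : MonotoneOn φ (Icc t₂ t₁) := by
    apply monotoneOn_of_deriv_nonneg (convex_Icc t₂ t₁)
      (fun t ht => ((hdiff t (hsub2 ht)).continuousAt).continuousWithinAt)
    · rw [interior_Icc]
      exact fun t ht => ((hdiff t (hsub2 (Ioo_subset_Icc_self ht))).differentiableWithinAt)
    · rw [interior_Icc]
      intro t ht
      have htIco : t ∈ Ico t₀ T := hsub2 (Ioo_subset_Icc_self ht)
      have h1 := hbar t htIco
      have h2 : φ t < -γ Dn := hnotA t ⟨ht.1, ht.2.le⟩
      have h3 : α (φ t) < α (-γ Dn) := hαmono (hdom t htIco) hmγ h2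
      have h4 : α (-γ Dn) = -ι Dn := by linarith [hγDn.2]
      simp only [hφ] at h1 h3 ⊢
      linarith
  have := hmono (left_mem_Icc.mpr ht₂lt.le) (right_mem_Icc.mpr ht₂lt.le) ht₂lt.le
  have h5 : -γ Dn ≤ φ t₂ := ht₂A.2
  linarith
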